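/- In the ARS with objects {a,b} and steps a→a and a→b, the set ζ of all derivations that eventually fire the step a→b is not the extension of any intensional strategy with memory. -/

import Mathlib

/-- A derivation over objects `O` and labels `L`: a partial function on ℕ whose
domain is an initial segment, with composable consecutive steps. -/
structure Deriv (O L : Type) where
  step : ℕ → Option (O × L × O)
  initial : ∀ i, step (i + 1) ≠ none → step i ≠ none
  comp : ∀ i s t, step i = some s → step (i + 1) = some t → t.1 = s.2.2

namespace Deriv
/-- Non-empty derivation. -/
def NE {O L : Type} (π : Deriv O L) : Prop := π.step 0 ≠ none
/-- Finite derivation. -/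
def Finite {O L : Type} (π : Deriv O L) : Prop := ∃ n, π.step n = none
/-- Derivation over the set of steps `Γ` of an ARS. -/
def Over {O L : Type} (Γ : Set (O × L × O)) (π : Deriv O L) : Prop :=
  ∀ i s, π.step i = some s → s ∈ Γ
end Deriv

/-- `π₀` is a prefix of `π`. -/
def DPrefix {O L : Type} (π₀ π : Deriv O L) : Prop :=
  ∀ i s, π₀.step i = some s → π.step i = some s

/-- History (trace) of the first `j` steps of a derivation. -/
def histD {O L : Type} (π : Deriv O L) (j : ℕ) : List (O × L) :=
  (List.range j).filterMap fun i => (π.step i).map fun s => (s.1, s.2.1)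

/-- Extension of an intensional strategy with memory. -/
def ExtOf {O L : Type} (lam : List (O × L) → O → Set (O × L × O)) : Set (Deriv O L) :=
  {π | π.NE ∧ ∀ j s, π.step j = some s → s ∈ lam (histD π j) s.1}

/-- Extension of a memoryless intensional strategy. -/
def MExtOf {O L : Type} (lam : O → Set (O × L × O)) : Set (Deriv O L) :=
  {π | π.NE ∧ ∀ j s, π.step j = some s → s ∈ lam s.1}

/-- Well-formedness of an intensional strategy with memory over the ARS `Γ`:
every chosen step has the current object as source and belongs to `Γ`. -/
def WfStrat {O L : Type} (Γ : Set (O × L × O))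
    (lam : List (O × L) → O → Set (O × L × O)) : Prop :=
  ∀ α a s, s ∈ lam α a → s.1 = a ∧ s ∈ Γ

/-- Well-formedness of a memoryless intensional strategy. -/
def MWfStrat {O L : Type} (Γ : Set (O × L × O)) (lam : O → Set (O × L × O)) : Prop :=
  ∀ a s, s ∈ lam a → s.1 = a ∧ s ∈ Γ

/-- `Γ` is a functional relation. -/
def FunctionalARS {O L : Type} (Γ : Set (O × L × O)) : Prop :=
  ∀ a φ b₁ b₂, (a, φ, b₁) ∈ Γ → (a, φ, b₂) ∈ Γ → b₁ = b₂

/-- `π` is a limit point of `ζ`: every finite non-empty prefix of `π` is a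
prefix of some member of `ζ`. -/
def LimPt {O L : Type} (ζ : Set (Deriv O L)) (π : Deriv O L) : Prop :=
  π.NE ∧ ∀ π₀ : Deriv O L, π₀.Finite → π₀.NE → DPrefix π₀ π → ∃ π' ∈ ζ, DPrefix π₀ π'

/-- `ζ` is closed: it contains all its limit points. -/
def ClosedStrat {O L : Type} (ζ : Set (Deriv O L)) : Prop :=
  ∀ π, LimPt ζ π → π ∈ ζ

/-- `ζ` is closed under non-empty prefixes. -/
def PrefClosed {O L : Type} (ζ : Set (Deriv O L)) : Prop :=
  ∀ π ∈ ζ, ∀ π₀ : Deriv O L, π₀.NE → DPrefix π₀ π → π₀ ∈ ζ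

inductive Obj : Type | a | b
inductive Lab : Type | f1 | f2

/-- The ARS with steps a →φ₁ a and a →φ₂ b. -/
def Gam : Set (Obj × Lab × Obj) :=
  {(Obj.a, Lab.f1, Obj.a), (Obj.a, Lab.f2, Obj.b)}

/-- The strategy of all derivations (a →φ₁ a)ⁿ (a →φ₂ b) that eventually fire
the step a → b. -/
def zeta : Set (Deriv Obj Lab) :=
  {π | ∃ n, (∀ i, i < n → π.step i = some (Obj.a, Lab.f1, Obj.a)) ∧
        π.step n = some (Obj.a, Lab.f2, Obj.b) ∧
        ∀ i, n < i → π.step i = none}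

/-- The infinite derivation (a →φ₁ a)^ω. -/
def piInf : Deriv Obj Lab where
  step := fun _ => some (Obj.a, Lab.f1, Obj.a)
  initial := by intro i h; simp
  comp := by intro i s t hs ht; injection hs with h; injection ht with h2; subst h; subst h2; rfl

/-- The finite derivation (a →φ₁ a)ⁿ (a →φ₂ b). -/
def piN (n : ℕ) : Deriv Obj Lab where
  step := fun i => if i < n then some (Obj.a, Lab.f1, Obj.a)
    else if i = n then some (Obj.a, Lab.f2, Obj.b) else none
  initial := by
    intro i h
    by_cases h1 : i < n
    · simp [h1]
    · by_cases h2 : i = n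
      · simp [h2]
      · exfalso; apply h
        have : ¬ (i + 1 < n) := by omega
        have : ¬ (i + 1 = n) := by omega
        simp_all
  comp := by
    intro i s t hs ht
    by_cases h1 : i < n
    · simp only [if_pos h1] at hs
      by_cases h2 : i + 1 < n
      · simp only [if_pos h2] at ht
        injection hs with h; subst h; injection ht with h; subst h; rfl
      · have h3 : i + 1 = n := by omega
        simp only [if_neg h2, if_pos h3] at ht
        injection hs with h; subst h; injection ht with h; subst h; rfl
    · by_cases h2 : i = n
      · have : ¬ (i + 1 < n) := by omega
        have : ¬ (i + 1 = n) := by omega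
        simp_all
      · simp_all

lemma piN_mem (n : ℕ) : piN n ∈ zeta := by
  refine ⟨n, ?_, ?_, ?_⟩
  · intro i hi; simp [piN, hi]
  · simp [piN]
  · intro i hi
    have h1 : ¬ (i < n) := by omega
    have h2 : ¬ (i = n) := by omega
    simp [piN, h1, h2]

lemma hist_eq (j : ℕ) : histD (piN (j + 1)) j = histD piInf j := by
  unfold histD
  apply List.filterMap_congr
  intro i hi
  have : i < j + 1 := by
    have := List.mem_range.mp hi; omega
  simp [piN, piInf, this, show i ≤ j by omega]

/-- `zeta` is not the extension of any intensional strategy with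
memory. -/
theorem eventually_fire_not_extension :
    ¬ ∃ lam, WfStrat Gam lam ∧ ExtOf lam = zeta := by
  rintro ⟨lam, _, hext⟩
  have hmem : piInf ∈ ExtOf lam := by
    refine ⟨by simp [Deriv.NE, piInf], ?_⟩
    intro j s hs
    have hs' : s = (Obj.a, Lab.f1, Obj.a) := by
      simpa [piInf] using hs.symm
    subst hs'
    have hN : piN (j + 1) ∈ ExtOf lam := by
      rw [hext]; exact piN_mem (j + 1)
    have hstep : (piN (j + 1)).step j = some (Obj.a, Lab.f1, Obj.a) := by
      simp [piN]
    have := hN.2 j _ hstep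
    rwa [hist_eq] at this
  rw [hext] at hmem
  obtain ⟨n, _, hn, _⟩ := hmem
  simp [piInf] at hn
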